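/- arXiv:1801.03785 — 2 statements merged into one kernel-verified Lean document; each statement's English description precedes it below -/
import Mathlib

section
/- Let H be a separable Hilbert space with orthonormal basis (e_k). A sequence (f_k) in H is a frame for H if and only if there exists a bounded surjective linear operator U : H → H with f_k = U(e_k) for all k. -/
local notation "⟪" x ", " y "⟫" => @inner ℂ _ _ x y
local notation "ℓ²" => lp (fun _ : ℕ => ℂ) 2

def IsFrame {H : Type*} [NormedAddCommGroup H] [InnerProductSpace ℂ H] (f : ℕ → H) : Prop :=
  ∃ A B : ℝ, 0 < A ∧ 0 < B ∧ ∀ x : H,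
    Summable (fun i => ‖⟪x, f i⟫‖ ^ 2) ∧
    A * ‖x‖ ^ 2 ≤ ∑' i, ‖⟪x, f i⟫‖ ^ 2 ∧
    ∑' i, ‖⟪x, f i⟫‖ ^ 2 ≤ B * ‖x‖ ^ 2

open ENNReal in
lemma memtwo_iff (g : ℕ → ℂ) : Memℓp g 2 ↔ Summable (fun i => ‖g i‖^2) := by
  rw [memℓp_gen_iff (by norm_num : (0:ℝ) < (2:ℝ≥0∞).toReal)]
  norm_num

lemma norm_sq_lp (x : ℓ²) : ‖x‖^2 = ∑' i, ‖x i‖^2 := by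
  have := lp.norm_rpow_eq_tsum (p := 2) (by norm_num) x
  norm_num at this
  exact_mod_cast this

open ContinuousLinearMap in
/-- A sequence is a frame iff it is the image of an orthonormal basis under a
bounded surjective operator. -/
theorem stmt1 {H : Type*} [NormedAddCommGroup H] [InnerProductSpace ℂ H] [CompleteSpace H]
    [TopologicalSpace.SeparableSpace H] (e : HilbertBasis ℕ ℂ H) (f : ℕ → H) :
    IsFrame f ↔
      ∃ U : H →L[ℂ] H, Function.Surjective U ∧ ∀ k, f k = U (e k) := by
  constructor
  · rintro ⟨A, B, hA, hB, h⟩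
    -- analysis operator
    have mem : ∀ x : H, Memℓp (fun k => ⟪f k, x⟫) 2 := by
      intro x
      rw [memtwo_iff]
      have := (h x).1
      simpa [norm_inner_symm] using this
    let T₀ : H →ₗ[ℂ] ℓ² :=
      { toFun := fun x => ⟨fun k => ⟪f k, x⟫, mem x⟩
        map_add' := by
          intro x y
          ext k
          simp [inner_add_right, lp.coeFn_add]
          rfl
        map_smul' := by
          intro c x
          ext k
          simp [inner_smul_right, lp.coeFn_smul] }
    have hT₀norm : ∀ x : H, ‖T₀ x‖ ^ 2 = ∑' i, ‖⟪x, f i⟫‖ ^ 2 := by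
      intro x
      rw [norm_sq_lp]
      congr 1
      funext i
      have : (T₀ x : ∀ _ : ℕ, ℂ) i = ⟪f i, x⟫ := rfl
      rw [this, ← norm_inner_symm]
    have hbound : ∀ x : H, ‖T₀ x‖ ≤ Real.sqrt B * ‖x‖ := by
      intro x
      have h1 : ‖T₀ x‖ ^ 2 ≤ B * ‖x‖ ^ 2 := by rw [hT₀norm]; exact (h x).2.2
      have := Real.sqrt_le_sqrt h1
      rwa [Real.sqrt_sq (norm_nonneg _), Real.sqrt_mul hB.le, Real.sqrt_sq (norm_nonneg _)]
        at this
    let T : H →L[ℂ] ℓ² := T₀.mkContinuous (Real.sqrt B) hbound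
    have hTapp : ∀ (x : H) (k : ℕ), (T x : ∀ _ : ℕ, ℂ) k = ⟪f k, x⟫ := fun _ _ => rfl
    have hTnorm : ∀ x : H, ‖T x‖ ^ 2 = ∑' i, ‖⟪x, f i⟫‖ ^ 2 := hT₀norm
    set S : H →L[ℂ] H := (adjoint T).comp T with hS
    have hSx : ∀ x y : H, ⟪S x, y⟫ = ⟪T x, T y⟫ := by
      intro x y
      rw [hS]
      simp only [coe_comp', Function.comp_apply]
      rw [adjoint_inner_left]
    have hlow : ∀ x : H, A * ‖x‖ ^ 2 ≤ ‖T x‖ ^ 2 := by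
      intro x; rw [hTnorm]; exact (h x).2.1
    have hSlow : ∀ x : H, A * ‖x‖ ^ 2 ≤ ‖S x‖ * ‖x‖ := by
      intro x
      calc A * ‖x‖ ^ 2 ≤ ‖T x‖ ^ 2 := hlow x
        _ = RCLike.re ⟪S x, x⟫ := by
            rw [hSx x x]
            rw [← @inner_self_eq_norm_sq ℂ]
        _ ≤ ‖⟪S x, x⟫‖ := RCLike.re_le_norm _
        _ ≤ ‖S x‖ * ‖x‖ := norm_inner_le_norm _ _
    have hSnorm : ∀ x : H, ‖x‖ ≤ A⁻¹ * ‖S x‖ := by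
      intro x
      rcases eq_or_ne x 0 with rfl | hx
      · simp
      · have hxpos : 0 < ‖x‖ := norm_pos_iff.mpr hx
        rw [le_inv_mul_iff₀ hA]
        nlinarith [hSlow x]
    -- S is surjective
    have hanti : AntilipschitzWith (A⁻¹).toNNReal S :=
      S.antilipschitz_of_bound (fun x => by
        simpa [Real.coe_toNNReal _ (inv_nonneg.mpr hA.le)] using hSnorm x)
    have hclosed : IsClosed (Set.range S) := hanti.isClosed_range S.uniformContinuous
    have hrange : LinearMap.range (S : H →ₗ[ℂ] H) = ⊤ := by
      set K : Submodule ℂ H := LinearMap.range (S : H →ₗ[ℂ] H) with hK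
      have hKclosed : IsClosed (K : Set H) := by
        have : (K : Set H) = Set.range S := by
          ext y; simp [hK, LinearMap.mem_range]
        rw [this]; exact hclosed
      haveI : CompleteSpace K := hKclosed.completeSpace_coe
      rw [← Submodule.orthogonal_eq_bot_iff]
      rw [Submodule.eq_bot_iff]
      intro y hy
      have h0 : ⟪S y, y⟫ = 0 := hy (S y) ⟨y, rfl⟩
      have : A * ‖y‖ ^ 2 ≤ 0 := by
        calc A * ‖y‖ ^ 2 ≤ ‖T y‖ ^ 2 := hlow y
          _ = RCLike.re ⟪S y, y⟫ := by rw [hSx y y, ← @inner_self_eq_norm_sq ℂ]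
          _ = 0 := by rw [h0]; simp
      have : ‖y‖ ^ 2 ≤ 0 := by nlinarith
      have : ‖y‖ = 0 := by nlinarith [sq_nonneg ‖y‖, norm_nonneg y]
      exact norm_eq_zero.mp this
    have hSsurj : Function.Surjective S := LinearMap.range_eq_top.mp hrange
    -- the operator
    let R : H →L[ℂ] ℓ² := (e.repr.toContinuousLinearEquiv : H →L[ℂ] ℓ²)
    refine ⟨(adjoint T).comp R, ?_, ?_⟩
    · intro y
      obtain ⟨x, hx⟩ := hSsurj y
      refine ⟨e.repr.symm (T x), ?_⟩
      have : R (e.repr.symm (T x)) = T x := by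
        simp [R, LinearIsometryEquiv.coe_toContinuousLinearEquiv]
      simp only [coe_comp', Function.comp_apply, this]
      exact hx
    · intro k
      have hrepr : R (e k) = lp.single 2 k (1 : ℂ) := by
        simp [R, LinearIsometryEquiv.coe_toContinuousLinearEquiv, e.repr_self]
      simp only [coe_comp', Function.comp_apply, hrepr]
      apply ext_inner_right ℂ
      intro z
      rw [adjoint_inner_left]
      rw [lp.inner_single_left]
      simp [hTapp]
  · rintro ⟨U, hU, hfk⟩
    set V := adjoint U with hV
    have key : ∀ (x : H) (i : ℕ), ‖⟪x, f i⟫‖ = ‖e.repr (V x) i‖ := by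
      intro x i
      rw [e.repr_apply_apply, hfk i, ← adjoint_inner_left, ← hV, ← norm_inner_symm]
    obtain ⟨C, hC, hCsurj⟩ := U.exists_preimage_norm_le hU
    have hVlow : ∀ x : H, ‖x‖ ^ 2 ≤ C * (‖V x‖ * ‖x‖) := by
      intro x
      obtain ⟨z, hz, hznorm⟩ := hCsurj x
      calc ‖x‖ ^ 2 = RCLike.re ⟪x, x⟫ := by rw [← @inner_self_eq_norm_sq ℂ]
        _ = RCLike.re ⟪V x, z⟫ := by rw [hV, adjoint_inner_left, hz]
        _ ≤ ‖⟪V x, z⟫‖ := RCLike.re_le_norm _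
        _ ≤ ‖V x‖ * ‖z‖ := norm_inner_le_norm _ _
        _ ≤ ‖V x‖ * (C * ‖x‖) := by
            exact mul_le_mul_of_nonneg_left hznorm (norm_nonneg _)
        _ = C * (‖V x‖ * ‖x‖) := by ring
    refine ⟨(C ^ 2)⁻¹, ‖V‖ ^ 2 + 1, by positivity, by positivity, fun x => ?_⟩
    have hsum : ∀ x : H, ∑' i, ‖⟪x, f i⟫‖ ^ 2 = ‖V x‖ ^ 2 := by
      intro x
      have h1 : ∀ i, ‖⟪x, f i⟫‖ ^ 2 = ‖e.repr (V x) i‖ ^ 2 := fun i => by rw [key]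
      rw [tsum_congr h1, ← norm_sq_lp (e.repr (V x)), LinearIsometryEquiv.norm_map]
    have hsummable : Summable (fun i => ‖⟪x, f i⟫‖ ^ 2) := by
      have : Summable (fun i => ‖e.repr (V x) i‖ ^ 2) :=
        (memtwo_iff _).mp (lp.memℓp (e.repr (V x)))
      exact this.congr (fun i => by rw [key])
    refine ⟨hsummable, ?_, ?_⟩
    · rw [hsum]
      have h1 := hVlow x
      rcases eq_or_ne x 0 with rfl | hx
      · simp
      · have hxpos : 0 < ‖x‖ := norm_pos_iff.mpr hx
        have h2 : ‖x‖ ≤ C * ‖V x‖ := by nlinarith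
        have h3 : ‖x‖ ^ 2 ≤ C ^ 2 * ‖V x‖ ^ 2 := by nlinarith [norm_nonneg (V x)]
        rw [inv_mul_le_iff₀ (by positivity)]
        linarith
    · rw [hsum]
      have := V.le_opNorm x
      nlinarith [norm_nonneg (V x), norm_nonneg x, V.opNorm_nonneg]
end

section
/- Let (f_k) be a frame for H and let U = {u_{l k}} be a bounded linear operator on ℓ². Define φ_l = Σ_k u_{l k} f_k. Then (φ_l) is a frame for H if and only if there exists C > 0 such that Σ_l |⟨φ_l, f⟩|² ≥ C Σ_k |⟨f_k, f⟩|² for all f ∈ H. -/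
local notation "⟪" x ", " y "⟫" => @inner ℂ _ _ x y
local notation "ℓ²" => lp (fun _ : ℕ => ℂ) 2

/-- Let `(f_k)` be a frame and `{u_{lk}}` a bounded operator on `ℓ²`.  With
`φ_l = ∑_k u_{lk} f_k`, the family `(φ_l)` is a frame iff there is `C > 0` with
`∑_l |⟪φ_l, x⟫|² ≥ C ∑_k |⟪f_k, x⟫|²` for all `x ∈ H`. -/
theorem stmt11 {H : Type*} [NormedAddCommGroup H] [InnerProductSpace ℂ H] [CompleteSpace H]
    [TopologicalSpace.SeparableSpace H] (f : ℕ → H) (hf : IsFrame f)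
    (u : ℕ → ℕ → ℂ) (U : ℓ² →L[ℂ] ℓ²)
    (hU : ∀ (c : ℓ²) (l : ℕ), HasSum (fun k => u l k * c k) ((U c : ℕ → ℂ) l))
    (φ : ℕ → H) (hφ : ∀ l, HasSum (fun k => u l k • f k) (φ l)) :
    IsFrame φ ↔ ∃ C : ℝ, 0 < C ∧ ∀ x : H,
      C * ∑' k, ‖⟪f k, x⟫‖ ^ 2 ≤ ∑' l, ‖⟪φ l, x⟫‖ ^ 2 := by
  obtain ⟨A, B, hA, hB, hfr⟩ := hf
  have htwo : (0:ℝ) < (2 : ENNReal).toReal := by norm_num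
  have hmem : ∀ x : H, Memℓp (fun k => (starRingEnd ℂ) ⟪f k, x⟫) 2 := by
    intro x
    apply memℓp_gen
    have h := (hfr x).1
    simp only [ENNReal.toReal_ofNat, Real.rpow_two, RCLike.norm_conj]
    convert h using 2 with k
    rw [norm_inner_symm (𝕜 := ℂ) (f k) x]
  set c : H → ℓ² := fun x => ⟨fun k => (starRingEnd ℂ) ⟪f k, x⟫, hmem x⟩ with hc
  have hcnorm : ∀ x : H, ‖c x‖ ^ 2 = ∑' k, ‖⟪f k, x⟫‖ ^ 2 := by
    intro x
    have := lp.norm_rpow_eq_tsum htwo (c x)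
    simp only [ENNReal.toReal_ofNat, Real.rpow_two] at this
    rw [this]
    congr 1 with k
    rw [RCLike.norm_conj]
  have hkey : ∀ (x : H) (l : ℕ), ‖⟪φ l, x⟫‖ = ‖(U (c x) : ℕ → ℂ) l‖ := by
    intro x l
    have h1 : HasSum (fun k => u l k * ⟪x, f k⟫) ⟪x, φ l⟫ := by
      have := (hφ l).mapL (innerSL ℂ x)
      simpa [inner_smul_right] using this
    have h2 : HasSum (fun k => u l k * ⟪x, f k⟫) ((U (c x) : ℕ → ℂ) l) := by
      have := hU (c x) l
      simpa [hc, inner_conj_symm] using this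
    rw [norm_inner_symm, h1.unique h2]
  have hUsum : ∀ x : H, Summable (fun l => ‖⟪φ l, x⟫‖ ^ 2) := by
    intro x
    have := (lp.memℓp (U (c x))).summable htwo
    simp only [ENNReal.toReal_ofNat, Real.rpow_two] at this
    simpa only [hkey x] using this
  have hUnorm : ∀ x : H, ∑' l, ‖⟪φ l, x⟫‖ ^ 2 = ‖U (c x)‖ ^ 2 := by
    intro x
    have := lp.norm_rpow_eq_tsum htwo (U (c x))
    simp only [ENNReal.toReal_ofNat, Real.rpow_two] at this
    rw [this]
    exact tsum_congr fun l => by rw [hkey x l]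
  have hupper : ∀ x : H, ∑' l, ‖⟪φ l, x⟫‖ ^ 2 ≤ (‖U‖ + 1) ^ 2 * B * ‖x‖ ^ 2 := by
    intro x
    rw [hUnorm x]
    have h1 : ‖U (c x)‖ ≤ (‖U‖ + 1) * ‖c x‖ := by
      calc ‖U (c x)‖ ≤ ‖U‖ * ‖c x‖ := U.le_opNorm _
        _ ≤ (‖U‖ + 1) * ‖c x‖ := by nlinarith [norm_nonneg (c x)]
    have h2 : ‖U (c x)‖ ^ 2 ≤ (‖U‖ + 1) ^ 2 * ‖c x‖ ^ 2 := by
      nlinarith [norm_nonneg (U (c x)), norm_nonneg (c x), norm_nonneg U]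
    have h3 : ‖c x‖ ^ 2 ≤ B * ‖x‖ ^ 2 := by
      rw [hcnorm x]
      have := (hfr x).2.2
      calc ∑' k, ‖⟪f k, x⟫‖ ^ 2 = ∑' k, ‖⟪x, f k⟫‖ ^ 2 :=
            tsum_congr fun k => by rw [norm_inner_symm]
        _ ≤ B * ‖x‖ ^ 2 := this
    calc ‖U (c x)‖ ^ 2 ≤ (‖U‖ + 1) ^ 2 * ‖c x‖ ^ 2 := h2
      _ ≤ (‖U‖ + 1) ^ 2 * B * ‖x‖ ^ 2 := by nlinarith [sq_nonneg (‖U‖ + 1)]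
  constructor
  · rintro ⟨A', B', hA', hB', hfr'⟩
    refine ⟨A' / B, by positivity, fun x => ?_⟩
    have h1 := (hfr' x).2.1
    have h2 := (hfr x).2.2
    have hsum : ∑' l, ‖⟪x, φ l⟫‖ ^ 2 = ∑' l, ‖⟪φ l, x⟫‖ ^ 2 :=
      tsum_congr fun l => by rw [norm_inner_symm]
    have hsum2 : ∑' k, ‖⟪f k, x⟫‖ ^ 2 = ∑' k, ‖⟪x, f k⟫‖ ^ 2 :=
      tsum_congr fun k => by rw [norm_inner_symm]
    rw [hsum2, ← hsum]
    calc A' / B * ∑' k, ‖⟪x, f k⟫‖ ^ 2 ≤ A' / B * (B * ‖x‖ ^ 2) := by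
          apply mul_le_mul_of_nonneg_left h2 (by positivity)
      _ = A' * ‖x‖ ^ 2 := by field_simp
      _ ≤ ∑' l, ‖⟪x, φ l⟫‖ ^ 2 := h1
  · rintro ⟨C, hC, hCx⟩
    refine ⟨C * A, (‖U‖ + 1) ^ 2 * B, by positivity, by positivity, fun x => ?_⟩
    have hsum : ∑' l, ‖⟪x, φ l⟫‖ ^ 2 = ∑' l, ‖⟪φ l, x⟫‖ ^ 2 :=
      tsum_congr fun l => by rw [norm_inner_symm]
    refine ⟨by simpa only [norm_inner_symm] using hUsum x, ?_, ?_⟩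
    · rw [hsum]
      have h1 := (hfr x).2.1
      have hsum2 : ∑' k, ‖⟪f k, x⟫‖ ^ 2 = ∑' k, ‖⟪x, f k⟫‖ ^ 2 :=
        tsum_congr fun k => by rw [norm_inner_symm]
      calc C * A * ‖x‖ ^ 2 ≤ C * ∑' k, ‖⟪x, f k⟫‖ ^ 2 := by
            rw [mul_assoc]; exact mul_le_mul_of_nonneg_left h1 hC.le
        _ = C * ∑' k, ‖⟪f k, x⟫‖ ^ 2 := by rw [hsum2]
        _ ≤ ∑' l, ‖⟪φ l, x⟫‖ ^ 2 := hCx x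
    · rw [hsum]; exact hupper x
end
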